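/- If 𝒻 and 𝒢 are regular families of finite subsets of ℕ, then the Cantor-Bendixson-type index satisfies ι((𝒻,𝒢)) = ι(𝒢) + ι(𝒻), where (𝒻,𝒢) = {E⌢F : E ∈ 𝒻, F ∈ 𝒢, E < F} ∪ 𝒻 ∪ 𝒢 consists of all concatenations E∪F with max E < min F, E ∈ 𝒻, F ∈ 𝒢. -/

import Mathlib

open Ordinal

/-- A family of finite subsets of `ℕ` is hereditary if it contains all subsets of
its members. -/
def IsHereditary (F : Set (Finset ℕ)) : Prop := ∀ E ∈ F, ∀ G ⊆ E, G ∈ F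

/-- A family of finite subsets of `ℕ` is spreading if it is closed under replacing
the elements of a member by larger ones, preserving the order. -/
def IsSpreading (F : Set (Finset ℕ)) : Prop :=
  ∀ E ∈ F, ∀ f : ℕ → ℕ, StrictMonoOn f (E : Set ℕ) → (∀ n ∈ E, n ≤ f n) →
    E.image f ∈ F

/-- A family of finite subsets of `ℕ` is regular if it is compact (as a subset of
the Cantor set `2^ℕ`, identifying sets with their indicator functions), spreading
and hereditary. -/
def IsRegularFamily (F : Set (Finset ℕ)) : Prop :=
  IsCompact ((fun (E : Finset ℕ) (n : ℕ) => decide (n ∈ E)) '' F) ∧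
    IsSpreading F ∧ IsHereditary F

/-- The derivative of a family: remove the maximal elements (those admitting no
extension by a larger element within the family). -/
def famDeriv (F : Set (Finset ℕ)) : Set (Finset ℕ) :=
  {E ∈ F | ∃ n : ℕ, (∀ m ∈ E, m < n) ∧ insert n E ∈ F}

/-- Transfinite iterates of the family derivative. -/
noncomputable def famIter (F : Set (Finset ℕ)) (ξ : Ordinal) : Set (Finset ℕ) :=
  Ordinal.limitRecOn ξ F (fun _ ih => famDeriv ih)
    (fun o _ ih => ⋂ (ζ : Set.Iio o), ih ζ.1 ζ.2)

/-- The Cantor–Bendixson-type index of a family: the least ordinal `ξ` such that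
`d^ξ(F) ⊆ {∅}`. -/
noncomputable def famIota (F : Set (Finset ℕ)) : Ordinal :=
  sInf {ξ : Ordinal | famIter F ξ ⊆ {(∅ : Finset ℕ)}}

/-- The "sum" `(𝒻,𝒢)` of two families: all unions `E ∪ F` with `E ∈ 𝒻`, `F ∈ 𝒢`
and `max E < min F`, together with `𝒻` and `𝒢`. -/
def famSum (F G : Set (Finset ℕ)) : Set (Finset ℕ) :=
  {H : Finset ℕ | ∃ E ∈ F, ∃ E' ∈ G, (∀ m ∈ E, ∀ n ∈ E', m < n) ∧ H = E ∪ E'} ∪ F ∪ G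

/-- The "product" `𝒻[𝒢]` of two families: unions of `𝒻`-admissible sequences of
members of `𝒢`, i.e. `E_1 < … < E_s` with each `E_i ∈ 𝒢` and `(min E_i)_i ∈ 𝒻`. -/
def famProd (F G : Set (Finset ℕ)) : Set (Finset ℕ) :=
  {H : Finset ℕ | ∃ l : List {E : Finset ℕ // E.Nonempty},
    l ≠ [] ∧ (∀ E ∈ l, (E : Finset ℕ) ∈ G) ∧
    l.Chain' (fun E E' => ∀ m ∈ (E : Finset ℕ), ∀ n ∈ (E' : Finset ℕ), m < n) ∧
    (l.map fun E => E.1.min' E.2).toFinset ∈ F ∧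
    H = l.foldr (fun E acc => E.1 ∪ acc) ∅}

-- Auxiliary lemmas

lemma famDeriv_subset (F : Set (Finset ℕ)) : famDeriv F ⊆ F := fun _ h => h.1

lemma famDeriv_mono {F G : Set (Finset ℕ)} (h : F ⊆ G) : famDeriv F ⊆ famDeriv G := by
  rintro E ⟨hE, n, hn, hins⟩
  exact ⟨h hE, n, hn, h hins⟩

@[simp] lemma famIter_zero (F : Set (Finset ℕ)) : famIter F 0 = F := by
  simp [famIter]

@[simp] lemma famIter_succ (F : Set (Finset ℕ)) (ξ : Ordinal) :
    famIter F (ξ + 1) = famDeriv (famIter F ξ) := by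
  rw [famIter, add_one_eq_succ, Ordinal.limitRecOn_succ]
  rfl

lemma famIter_limit (F : Set (Finset ℕ)) {ξ : Ordinal} (h : Order.IsSuccLimit ξ) :
    famIter F ξ = ⋂ (ζ : Set.Iio ξ), famIter F ζ.1 := by
  rw [famIter, Ordinal.limitRecOn_limit _ _ _ _ h]
  rfl

lemma famIter_antitone (F : Set (Finset ℕ)) : ∀ {ζ ξ : Ordinal}, ζ ≤ ξ →
    famIter F ξ ⊆ famIter F ζ := by
  intro ζ ξ
  induction ξ using Ordinal.limitRecOn with
  | zero => intro h; rw [nonpos_iff_eq_zero.mp h]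
  | add_one ξ ih =>
    intro h
    rcases eq_or_lt_of_le h with rfl | h
    · rfl
    · have : ζ ≤ ξ := Order.lt_add_one_iff.mp h
      rw [famIter_succ]
      exact (famDeriv_subset _).trans (ih this)
  | limit ξ hlim ih =>
    intro h
    rcases eq_or_lt_of_le h with rfl | h
    · rfl
    · rw [famIter_limit F hlim]
      exact Set.iInter_subset (fun (z : Set.Iio ξ) => famIter F z.1) ⟨ζ, h⟩

lemma famIter_subset_self (F : Set (Finset ℕ)) (ξ : Ordinal) : famIter F ξ ⊆ F := by
  have := famIter_antitone F (zero_le (a := ξ))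
  rwa [famIter_zero] at this

lemma famIter_add (F : Set (Finset ℕ)) (a : Ordinal) : ∀ b : Ordinal,
    famIter F (a + b) = famIter (famIter F a) b := by
  intro b
  induction b using Ordinal.limitRecOn with
  | zero => simp
  | add_one b ih =>
    rw [← add_assoc, famIter_succ, famIter_succ, ih]
  | limit b hlim ih =>
    rw [famIter_limit F (Ordinal.isSuccLimit_add a hlim), famIter_limit _ hlim]
    apply subset_antisymm
    · intro H hH
      simp only [Set.mem_iInter] at hH ⊢
      intro ⟨z, hz⟩
      have := hH ⟨a + z, (add_lt_add_iff_left a).mpr hz⟩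
      rwa [ih z hz] at this
    · intro H hH
      simp only [Set.mem_iInter] at hH ⊢
      intro ⟨z, hz⟩
      rcases le_or_gt a z with h | h
      · have hz' : z - a < b := by
          rwa [Ordinal.sub_lt_of_le h]
        have := hH ⟨z - a, hz'⟩
        rw [← ih _ hz', Ordinal.add_sub_cancel_of_le h] at this
        exact this
      · -- z < a : famIter F z ⊇ famIter F a ⊇ famIter (famIter F a) 0 ⊇ any
        have h0 : (0:Ordinal) < b := hlim.pos
        have := hH ⟨0, h0⟩
        rw [famIter_zero] at this
        exact famIter_antitone F h.le this

-- PART 1: preservation of hereditary/spreading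
lemma IsHereditary.famDeriv {F : Set (Finset ℕ)} (hF : IsHereditary F) :
    IsHereditary (famDeriv F) := by
  rintro E ⟨hE, n, hn, hins⟩ G hGE
  refine ⟨hF E hE G hGE, n, fun m hm => hn m (hGE hm), ?_⟩
  exact hF _ hins _ (Finset.insert_subset_insert _ hGE)

lemma IsSpreading.famDeriv {F : Set (Finset ℕ)} (hS : IsSpreading F) :
    IsSpreading (famDeriv F) := by
  rintro E ⟨hE, n, hn, hins⟩ f hmono hle
  have hnE : n ∉ E := fun h => lt_irrefl n (hn n h)
  set N : ℕ := max n ((E.image f).sup id + 1) with hN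
  have hltN : ∀ y ∈ E.image f, y < N := by
    intro y hy
    have : y ≤ (E.image f).sup id := Finset.le_sup (f := id) hy
    exact lt_of_le_of_lt this (lt_of_lt_of_le (Nat.lt_succ_self _) (le_max_right _ _))
  set f' : ℕ → ℕ := fun m => if m = n then N else f m with hf'
  have hf'E : ∀ m ∈ E, f' m = f m := by
    intro m hm
    have hne : m ≠ n := ne_of_lt (hn m hm)
    simp only [hf', if_neg hne]
  have himg : (insert n E).image f' = insert N (E.image f) := by
    rw [Finset.image_insert]
    have : f' n = N := by simp [hf']
    rw [this, Finset.image_congr (fun m hm => hf'E m hm)]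
  have hmono' : StrictMonoOn f' ↑(insert n E) := by
    intro a ha b hb hab
    simp only [Finset.coe_insert, Set.mem_insert_iff] at ha hb
    rcases hb with rfl | hb
    · rcases ha with rfl | ha
      · exact absurd hab (lt_irrefl _)
      · rw [hf'E a ha]
        show f a < f' b
        have : f' b = N := by simp [hf']
        rw [this]
        exact hltN _ (Finset.mem_image_of_mem f ha)
    · have haE : a ∈ E := by
        rcases ha with rfl | ha
        · exact absurd (hab.trans (hn b hb)) (lt_irrefl _)
        · exact ha
      rw [hf'E a haE, hf'E b hb]
      exact hmono haE hb hab
  have hle' : ∀ m ∈ insert n E, m ≤ f' m := by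
    intro m hm
    rcases Finset.mem_insert.mp hm with rfl | hm
    · show m ≤ f' m
      have : f' m = N := by simp [hf']
      rw [this]; exact le_max_left _ _
    · rw [hf'E m hm]; exact hle m hm
  have := hS (insert n E) hins f' hmono' hle'
  rw [himg] at this
  exact ⟨hS E hE f hmono hle, N, hltN, this⟩

lemma IsHereditary.famIter {F : Set (Finset ℕ)} (hF : IsHereditary F) (ξ : Ordinal) :
    IsHereditary (famIter F ξ) := by
  induction ξ using Ordinal.limitRecOn with
  | zero => rwa [famIter_zero]
  | add_one ξ ih => rw [famIter_succ]; exact ih.famDeriv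
  | limit ξ hlim ih =>
    rw [famIter_limit F hlim]
    intro E hE G hGE
    rw [Set.mem_iInter] at hE ⊢
    exact fun z => ih z.1 z.2 E (hE z) G hGE

lemma IsSpreading.famIter {F : Set (Finset ℕ)} (hF : IsSpreading F) (ξ : Ordinal) :
    IsSpreading (famIter F ξ) := by
  induction ξ using Ordinal.limitRecOn with
  | zero => rwa [famIter_zero]
  | add_one ξ ih => rw [famIter_succ]; exact ih.famDeriv
  | limit ξ hlim ih =>
    rw [famIter_limit F hlim]
    intro E hE f hm hl
    rw [Set.mem_iInter] at hE ⊢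
    exact fun z => ih z.1 z.2 E (hE z) f hm hl

-- PART 2 : famSum basics and the key derivative lemma
lemma famSum_subset_left (F G : Set (Finset ℕ)) : F ⊆ famSum F G :=
  fun _ h => Or.inl (Or.inr h)

lemma famSum_subset_right (F G : Set (Finset ℕ)) : G ⊆ famSum F G :=
  fun _ h => Or.inr h

lemma mem_famSum_iff {F G : Set (Finset ℕ)} (h0F : ∅ ∈ F) (h0G : ∅ ∈ G) {H : Finset ℕ} :
    H ∈ famSum F G ↔
      ∃ E ∈ F, ∃ E' ∈ G, (∀ m ∈ E, ∀ k ∈ E', m < k) ∧ H = E ∪ E' := by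
  constructor
  · rintro ((h | h) | h)
    · exact h
    · exact ⟨H, h, ∅, h0G, by simp, by simp⟩
    · exact ⟨∅, h0F, H, h, by simp, by simp⟩
  · intro h
    exact Or.inl (Or.inl h)

lemma famSum_eq_left {F G : Set (Finset ℕ)} (h0F : ∅ ∈ F) (hG : G ⊆ {(∅ : Finset ℕ)}) :
    famSum F G = F := by
  apply subset_antisymm
  · rintro H ((⟨E, hE, E', hE', _, rfl⟩ | h) | h)
    · have : E' = ∅ := hG hE'
      subst this
      simpa using hE
    · exact h
    · have : H = ∅ := hG h
      subst this
      exact h0F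
  · exact famSum_subset_left F G

lemma exists_large_singleton {G : Set (Finset ℕ)} (hS : IsSpreading G) (hh : IsHereditary G)
    {E₀ : Finset ℕ} (hE₀ : E₀ ∈ G) (hne : E₀ ≠ ∅) (k : ℕ) :
    ∃ n, k ≤ n ∧ {n} ∈ G := by
  have hne' : E₀.Nonempty := Finset.nonempty_iff_ne_empty.mpr hne
  set m := E₀.min' hne' with hm
  have hmem : ({m} : Finset ℕ) ∈ G :=
    hh E₀ hE₀ {m} (Finset.singleton_subset_iff.mpr (E₀.min'_mem hne'))
  refine ⟨max m k, le_max_right _ _, ?_⟩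
  have hmono : StrictMonoOn (fun _ => max m k) (↑({m} : Finset ℕ) : Set ℕ) := by
    intro a ha b hb hab
    simp only [Finset.coe_singleton, Set.mem_singleton_iff] at ha hb
    subst ha; subst hb
    exact absurd hab (lt_irrefl _)
  have hle : ∀ x ∈ ({m} : Finset ℕ), x ≤ max m k := by
    intro x hx
    rw [Finset.mem_singleton] at hx
    subst hx
    exact le_max_left _ _
  have := hS {m} hmem (fun _ => max m k) hmono hle
  rwa [Finset.image_singleton] at this

lemma famDeriv_famSum {F G : Set (Finset ℕ)}
    (hFh : IsHereditary F) (h0F : ∅ ∈ F)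
    (hGs : IsSpreading G) (hGh : IsHereditary G)
    (hne : ∃ E ∈ G, E ≠ ∅) :
    famDeriv (famSum F G) = famSum F (famDeriv G) := by
  obtain ⟨E₀, hE₀, hE₀ne⟩ := hne
  have h0G : ∅ ∈ G := hGh E₀ hE₀ ∅ (Finset.empty_subset _)
  have h0dG : ∅ ∈ famDeriv G := by
    obtain ⟨n, _, hsing⟩ := exists_large_singleton hGs hGh hE₀ hE₀ne 0
    exact ⟨h0G, n, by simp, by simpa using hsing⟩
  apply subset_antisymm
  · rintro H ⟨hHmem, n, hn, hins⟩
    rw [mem_famSum_iff h0F h0G] at hins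
    obtain ⟨E, hE, E'', hE'', hlt, heq⟩ := hins
    have hnH : n ∉ H := fun h => lt_irrefl n (hn n h)
    by_cases hcase : n ∈ E''
    · have hnE : n ∉ E := fun h => lt_irrefl n (hlt n h n hcase)
      have key : H = E ∪ E''.erase n := by
        calc H = (insert n H).erase n := (Finset.erase_insert hnH).symm
          _ = (E ∪ E'').erase n := by rw [heq]
          _ = E.erase n ∪ E''.erase n := Finset.erase_union_distrib _ _ _
          _ = E ∪ E''.erase n := by rw [Finset.erase_eq_of_notMem hnE]
      have hmemlt : ∀ m ∈ E''.erase n, m < n := by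
        intro m hm
        have hmE'' : m ∈ E'' := Finset.mem_of_mem_erase hm
        have hmne : m ≠ n := Finset.ne_of_mem_erase hm
        have : m ∈ insert n H := by
          rw [heq]
          exact Finset.mem_union_right _ hmE''
        rcases Finset.mem_insert.mp this with h | h
        · exact absurd h hmne
        · exact hn m h
      have hE₂d : E''.erase n ∈ famDeriv G :=
        ⟨hGh E'' hE'' _ (Finset.erase_subset _ _), n, hmemlt,
          by rwa [Finset.insert_erase hcase]⟩
      exact Or.inl (Or.inl ⟨E, hE, E''.erase n, hE₂d,
        fun m hm k hk => hlt m hm k (Finset.mem_of_mem_erase hk), key⟩)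
    · have hnE : n ∈ E := by
        have : n ∈ E ∪ E'' := by
          rw [← heq]; exact Finset.mem_insert_self n H
        rcases Finset.mem_union.mp this with h | h
        · exact h
        · exact absurd h hcase
      have hE''e : E'' = ∅ := by
        by_contra h
        obtain ⟨p, hp⟩ := Finset.nonempty_iff_ne_empty.mpr h
        have h1 : n < p := hlt n hnE p hp
        have : p ∈ insert n H := by
          rw [heq]; exact Finset.mem_union_right _ hp
        rcases Finset.mem_insert.mp this with h | h
        · exact absurd h1 (h ▸ lt_irrefl n)
        · exact absurd (h1.trans (hn p h)) (lt_irrefl n)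
      rw [hE''e, Finset.union_empty] at heq
      have hHF : H ∈ F := hFh E (heq ▸ hE) H (heq ▸ Finset.subset_insert n H)
      exact Or.inl (Or.inl ⟨H, hHF, ∅, h0dG, by simp, by simp⟩)
  · intro H hH
    rw [mem_famSum_iff h0F h0dG] at hH
    obtain ⟨E, hE, E', hE'd, hlt, rfl⟩ := hH
    obtain ⟨hE'G, n, hnE', hinsE'⟩ := hE'd
    have hmem : E ∪ E' ∈ famSum F G := Or.inl (Or.inl ⟨E, hE, E', hE'G, hlt, rfl⟩)
    by_cases hcase : E' = ∅
    · subst hcase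
      obtain ⟨k, hk, hsing⟩ := exists_large_singleton hGs hGh hE₀ hE₀ne ((E.sup id) + 1)
      refine ⟨hmem, k, ?_, ?_⟩
      · intro m hm
        rw [Finset.union_empty] at hm
        have : m ≤ E.sup id := Finset.le_sup (f := id) hm
        omega
      · refine Or.inl (Or.inl ⟨E, hE, {k}, hsing, ?_, ?_⟩)
        · intro m hm j hj
          rw [Finset.mem_singleton] at hj
          subst hj
          have : m ≤ E.sup id := Finset.le_sup (f := id) hm
          omega
        · rw [Finset.union_empty, Finset.insert_eq, Finset.union_comm]
    · obtain ⟨p, hp⟩ := Finset.nonempty_iff_ne_empty.mpr hcase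
      refine ⟨hmem, n, ?_, ?_⟩
      · intro m hm
        rcases Finset.mem_union.mp hm with h | h
        · exact (hlt m h p hp).trans (hnE' p hp)
        · exact hnE' m h
      · refine Or.inl (Or.inl ⟨E, hE, insert n E', hinsE', ?_, ?_⟩)
        · intro m hm j hj
          rcases Finset.mem_insert.mp hj with rfl | hj
          · exact (hlt m hm p hp).trans (hnE' p hp)
          · exact hlt m hm j hj
        · rw [Finset.union_insert]

-- PART 3 : intersection lemma and iterated derivative of the sum
lemma famSum_mono_right {F G₁ G₂ : Set (Finset ℕ)} (h : G₁ ⊆ G₂) :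
    famSum F G₁ ⊆ famSum F G₂ := by
  rintro H ((⟨E, hE, E', hE', hlt, rfl⟩ | h') | h')
  · exact Or.inl (Or.inl ⟨E, hE, E', h hE', hlt, rfl⟩)
  · exact Or.inl (Or.inr h')
  · exact Or.inr (h h')

lemma iInter_famSum {lam : Ordinal} (hlam : Order.IsSuccLimit lam) {F : Set (Finset ℕ)} (h0F : ∅ ∈ F)
    (Gf : Ordinal → Set (Finset ℕ)) (hdec : ∀ {ζ ξ : Ordinal}, ζ ≤ ξ → Gf ξ ⊆ Gf ζ)
    (h0 : ∀ ζ : Set.Iio lam, ∅ ∈ Gf ζ.1) :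
    ⋂ (ζ : Set.Iio lam), famSum F (Gf ζ.1) = famSum F (⋂ (ζ : Set.Iio lam), Gf ζ.1) := by
  apply subset_antisymm
  · intro H hH
    rw [Set.mem_iInter] at hH
    choose c1 hc1 c2 hc2 hc3 hc4 using
      fun ζ : Set.Iio lam => (mem_famSum_iff h0F (h0 ζ)).mp (hH ζ)
    have key : ∃ ζ₀ : Set.Iio lam, ∀ ξ : Set.Iio lam, c2 ζ₀ ∈ Gf ξ.1 := by
      by_contra hcon
      push_neg at hcon
      set R : Set (Finset ℕ) := Set.range c2 with hR
      have hRfin : R.Finite := by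
        apply Set.Finite.subset (H.powerset.finite_toSet)
        rintro E' ⟨ζ, rfl⟩
        rw [Finset.coe_powerset, Set.mem_preimage, Set.mem_powerset_iff, Finset.coe_subset]
        rw [hc4 ζ]
        exact Finset.subset_union_right
      have hchoice : ∀ E' : Finset ℕ, ∃ ξ : Set.Iio lam, (E' ∈ R → E' ∉ Gf ξ.1) := by
        intro E'
        by_cases h : E' ∈ R
        · obtain ⟨ζ, rfl⟩ := h
          obtain ⟨ξ, hξ⟩ := hcon ζ
          exact ⟨ξ, fun _ => hξ⟩
        · exact ⟨⟨0, hlam.pos⟩, fun h' => absurd h' h⟩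
      choose d hd using hchoice
      set s := hRfin.toFinset with hs
      have hsne : s.Nonempty := by
        rw [hs, Set.Finite.toFinset_nonempty]
        exact ⟨c2 ⟨0, hlam.pos⟩, ⟨0, hlam.pos⟩, rfl⟩
      set T : Finset Ordinal := s.image (fun E' => (d E').1) with hT
      have hTne : T.Nonempty := hsne.image _
      set β := T.max' hTne with hβ
      have hβlt : β < lam := by
        obtain ⟨E', _, hE'⟩ := Finset.mem_image.mp (T.max'_mem hTne)
        rw [hβ, ← hE']
        exact (d E').2
      have hmem : c2 ⟨β, hβlt⟩ ∈ R := ⟨⟨β, hβlt⟩, rfl⟩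
      have hle : (d (c2 ⟨β, hβlt⟩)).1 ≤ β := by
        apply Finset.le_max'
        exact Finset.mem_image.mpr ⟨c2 ⟨β, hβlt⟩, hRfin.mem_toFinset.mpr hmem, rfl⟩
      exact hd _ hmem (hdec hle (hc2 ⟨β, hβlt⟩))
    obtain ⟨ζ₀, hζ₀⟩ := key
    exact Or.inl (Or.inl ⟨c1 ζ₀, hc1 ζ₀, c2 ζ₀, Set.mem_iInter.mpr hζ₀, hc3 ζ₀, hc4 ζ₀⟩)
  · rw [Set.subset_iInter_iff]
    intro ζ
    exact famSum_mono_right (Set.iInter_subset _ ζ)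

lemma famIter_famSum {F G : Set (Finset ℕ)} (hFh : IsHereditary F) (h0F : ∅ ∈ F)
    (hGs : IsSpreading G) (hGh : IsHereditary G) :
    ∀ ξ : Ordinal, ¬ (famIter G ξ ⊆ {(∅ : Finset ℕ)}) →
      famIter (famSum F G) ξ = famSum F (famIter G ξ) := by
  intro ξ
  induction ξ using Ordinal.limitRecOn with
  | zero => intro _; simp
  | add_one ξ ih =>
    intro h
    rw [famIter_succ] at h ⊢
    rw [famIter_succ]
    have hξ : ¬ famIter G ξ ⊆ {(∅ : Finset ℕ)} :=
      fun hsub => h (fun H hH => hsub ((famDeriv_subset _) hH))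
    rw [ih hξ]
    obtain ⟨H, hH, hHne⟩ := Set.not_subset.mp h
    exact famDeriv_famSum hFh h0F (hGs.famIter ξ) (hGh.famIter ξ)
      ⟨H, famDeriv_subset _ hH, by simpa using hHne⟩
  | limit ξ hlim ih =>
    intro h
    have hζ : ∀ ζ : Set.Iio ξ, ¬ famIter G ζ.1 ⊆ {(∅ : Finset ℕ)} := by
      intro ζ hsub
      exact h ((famIter_antitone G ζ.2.le).trans hsub)
    have h0each : ∀ ζ : Set.Iio ξ, ∅ ∈ famIter G ζ.1 := by
      intro ζ
      obtain ⟨H, hH, _⟩ := Set.not_subset.mp (hζ ζ)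
      exact hGh.famIter ζ.1 H hH ∅ (Finset.empty_subset _)
    rw [famIter_limit _ hlim, famIter_limit G hlim]
    calc ⋂ (ζ : Set.Iio ξ), famIter (famSum F G) ζ.1
        = ⋂ (ζ : Set.Iio ξ), famSum F (famIter G ζ.1) :=
          Set.iInter_congr (fun ζ => ih ζ.1 ζ.2 (hζ ζ))
      _ = famSum F (⋂ (ζ : Set.Iio ξ), famIter G ζ.1) :=
          iInter_famSum hlim h0F (famIter G) (famIter_antitone G) h0each

-- PART 4 : compactness gives attainment of the index
universe u in
lemma exists_famIter_subset {X : Set (Finset ℕ)} (hX : IsRegularFamily X) :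
    ∃ ξ : Ordinal.{u}, famIter X ξ ⊆ {(∅ : Finset ℕ)} := by
  classical
  obtain ⟨hcomp, _hspread, hhered⟩ := hX
  -- Step 1: the derivative sequence stabilizes
  have hstab : ∃ ξ : Ordinal.{u}, famIter X (ξ + 1) = famIter X ξ := by
    by_contra hcon
    push_neg at hcon
    have hss : ∀ {ζ ξ : Ordinal}, ζ < ξ → famIter X ξ ⊂ famIter X ζ := by
      intro ζ ξ h
      have h1 : famIter X ξ ⊆ famIter X (ζ + 1) := by
        apply famIter_antitone
        rw [add_one_eq_succ]
        exact Order.succ_le_of_lt h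
      have h2 : famIter X (ζ + 1) ⊂ famIter X ζ := by
        refine HasSubset.Subset.ssubset_of_ne ?_ (hcon ζ)
        rw [famIter_succ]
        exact famDeriv_subset _
      exact h1.trans_ssubset h2
    have hinj : Function.Injective (famIter X) := by
      intro a b hab
      rcases lt_trichotomy a b with h | h | h
      · exact absurd hab.symm (hss h).ne
      · exact h
      · exact absurd hab (hss h).ne
    exact not_small_ordinal.{_,0} (small_of_injective hinj)
  obtain ⟨ξ₀, hfix⟩ := hstab
  rw [famIter_succ] at hfix
  by_cases hS : famIter X ξ₀ = ∅
  · exact ⟨ξ₀, by rw [hS]; exact Set.empty_subset _⟩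
  exfalso
  obtain ⟨H₀, hH₀⟩ := Set.nonempty_iff_ne_empty.mpr hS
  have h0S : ∅ ∈ famIter X ξ₀ :=
    (hhered.famIter ξ₀) H₀ hH₀ ∅ (Finset.empty_subset _)
  -- Step 2: build an infinite increasing chain
  have hext : ∀ E : {E : Finset ℕ // E ∈ famIter X ξ₀},
      ∃ n, (∀ m ∈ E.1, m < n) ∧ insert n E.1 ∈ famIter X ξ₀ := by
    intro E
    have : E.1 ∈ famDeriv (famIter X ξ₀) := hfix.symm ▸ E.2
    exact this.2
  choose nf hnf1 hnf2 using hext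
  set g : {E : Finset ℕ // E ∈ famIter X ξ₀} → {E : Finset ℕ // E ∈ famIter X ξ₀} :=
    fun E => ⟨insert (nf E) E.1, hnf2 E⟩ with hg
  set seq : ℕ → {E : Finset ℕ // E ∈ famIter X ξ₀} := fun k => g^[k] ⟨∅, h0S⟩ with hseq
  have hseqsucc : ∀ k, seq (k + 1) = g (seq k) := by
    intro k
    rw [hseq]
    exact Function.iterate_succ_apply' g k _
  set a : ℕ → ℕ := fun k => nf (seq k) with ha
  have hstep : ∀ k, (seq (k + 1)).1 = insert (a k) (seq k).1 := by
    intro k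
    rw [hseqsucc k]
  have hbig : ∀ k, ∀ m ∈ (seq k).1, m < a k := fun k => hnf1 (seq k)
  have hsubset : ∀ k, (seq k).1 ⊆ (seq (k + 1)).1 := by
    intro k
    rw [hstep k]
    exact Finset.subset_insert _ _
  have hmemsucc : ∀ k, a k ∈ (seq (k + 1)).1 := by
    intro k
    rw [hstep k]
    exact Finset.mem_insert_self _ _
  have hamono : StrictMono a := by
    apply strictMono_nat_of_lt_succ
    intro k
    exact hbig (k + 1) (a k) (hmemsucc k)
  have hmem_ge : ∀ j k, k < j → a k ∈ (seq j).1 := by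
    intro j
    induction j with
    | zero => intro k hk; omega
    | succ j ih =>
      intro k hk
      rcases Nat.lt_succ_iff_lt_or_eq.mp hk with h | h
      · exact hsubset j (ih k h)
      · subst h; exact hmemsucc k
  have hnotmem : ∀ n, n ∉ Set.range a → ∀ k, n ∉ (seq k).1 := by
    intro n hn k
    induction k with
    | zero =>
      show n ∉ (g^[0] ⟨∅, h0S⟩).1
      simp
    | succ k ih =>
      rw [hstep k]
      intro hmem
      rcases Finset.mem_insert.mp hmem with h | h
      · exact hn ⟨k, h.symm⟩
      · exact ih h
  -- Step 3: the limit indicator function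
  set χ : ℕ → Bool := fun n => decide (n ∈ Set.range a) with hχ
  have htend : Filter.Tendsto (fun k => (fun n => decide ((n : ℕ) ∈ (seq k).1)))
      Filter.atTop (nhds χ) := by
    rw [tendsto_pi_nhds]
    intro n
    rw [nhds_discrete, Filter.tendsto_pure]
    by_cases hn : n ∈ Set.range a
    · obtain ⟨j, rfl⟩ := hn
      rw [Filter.eventually_atTop]
      refine ⟨j + 1, fun k hk => ?_⟩
      have hmem : a j ∈ (seq k).1 := hmem_ge k j (by omega)
      have e1 : decide (a j ∈ (seq k).1) = true := decide_eq_true hmem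
      have e2 : χ (a j) = true := by
        show decide (a j ∈ Set.range a) = true
        exact decide_eq_true ⟨j, rfl⟩
      rw [e1, e2]
    · apply Filter.Eventually.of_forall
      intro k
      have e1 : decide (n ∈ (seq k).1) = false := decide_eq_false (hnotmem n hn k)
      have e2 : χ n = false := by
        show decide (n ∈ Set.range a) = false
        exact decide_eq_false hn
      rw [e1, e2]
  have hclosed : IsClosed ((fun (E : Finset ℕ) (n : ℕ) => decide (n ∈ E)) '' X) :=
    hcomp.isClosed
  have hmemimg : χ ∈ (fun (E : Finset ℕ) (n : ℕ) => decide (n ∈ E)) '' X := by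
    apply hclosed.mem_of_tendsto htend
    apply Filter.Eventually.of_forall
    intro k
    exact ⟨(seq k).1, famIter_subset_self X ξ₀ (seq k).2, rfl⟩
  obtain ⟨E', hE'X, hE'⟩ := hmemimg
  have hsub : Set.range a ⊆ ↑E' := by
    intro n hn
    have hcf : decide (n ∈ E') = χ n := congrFun hE' n
    have e2 : χ n = true := by
      show decide (n ∈ Set.range a) = true
      exact decide_eq_true hn
    rw [e2] at hcf
    exact of_decide_eq_true hcf
  exact (E'.finite_toSet.subset hsub).not_infinite
    (Set.infinite_range_of_injective hamono.injective)

-- PART 5 : main theorem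
lemma famSum_empty_left (G : Set (Finset ℕ)) : famSum ∅ G = G := by
  apply subset_antisymm
  · rintro H ((⟨E, hE, _⟩ | h) | h)
    · exact absurd hE (Set.notMem_empty E)
    · exact absurd h (Set.notMem_empty H)
    · exact h
  · exact famSum_subset_right _ _

lemma famSum_empty_right (F : Set (Finset ℕ)) : famSum F ∅ = F := by
  apply subset_antisymm
  · rintro H ((⟨E, hE, E', hE', _⟩ | h) | h)
    · exact absurd hE' (Set.notMem_empty E')
    · exact h
    · exact absurd h (Set.notMem_empty H)
  · exact famSum_subset_left _ _

lemma famIota_empty : famIota (∅ : Set (Finset ℕ)) = 0 := by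
  apply le_antisymm _ zero_le
  apply csInf_le (OrderBot.bddBelow _)
  show famIter ∅ 0 ⊆ {(∅ : Finset ℕ)}
  rw [famIter_zero]
  exact Set.empty_subset _

lemma famIota_of_subset {G : Set (Finset ℕ)} (h : G ⊆ {(∅ : Finset ℕ)}) : famIota G = 0 := by
  apply le_antisymm _ zero_le
  apply csInf_le (OrderBot.bddBelow _)
  show famIter G 0 ⊆ {(∅ : Finset ℕ)}
  rwa [famIter_zero]

/-- For regular families `𝒻, 𝒢`: `ι((𝒻,𝒢)) = ι(𝒢) + ι(𝒻)`. -/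
theorem famIota_famSum (F G : Set (Finset ℕ)) (hF : IsRegularFamily F)
    (hG : IsRegularFamily G) :
    famIota (famSum F G) = famIota G + famIota F := by
  obtain ⟨hFc, hFs, hFh⟩ := id hF
  obtain ⟨hGc, hGs, hGh⟩ := id hG
  by_cases hFe : F = ∅
  · subst hFe
    rw [famSum_empty_left, famIota_empty, add_zero]
  by_cases hGe : G = ∅
  · subst hGe
    rw [famSum_empty_right, famIota_empty, zero_add]
  obtain ⟨F₀, hF₀⟩ := Set.nonempty_iff_ne_empty.mpr hFe
  obtain ⟨G₀, hG₀⟩ := Set.nonempty_iff_ne_empty.mpr hGe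
  have h0F : ∅ ∈ F := hFh F₀ hF₀ ∅ (Finset.empty_subset _)
  have h0G : ∅ ∈ G := hGh G₀ hG₀ ∅ (Finset.empty_subset _)
  by_cases hGtriv : G ⊆ {(∅ : Finset ℕ)}
  · rw [famSum_eq_left h0F hGtriv, famIota_of_subset hGtriv, zero_add]
  -- the main case
  set a := famIota G with ha
  set b := famIota F with hb
  have ha_mem : famIter G a ⊆ {(∅ : Finset ℕ)} := csInf_mem (exists_famIter_subset hG)
  have hb_mem : famIter F b ⊆ {(∅ : Finset ℕ)} := csInf_mem (exists_famIter_subset hF)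
  have hlt : ∀ ξ < a, ¬ famIter G ξ ⊆ {(∅ : Finset ℕ)} :=
    fun ξ h hsub => (not_le.mpr h) (csInf_le (OrderBot.bddBelow _) hsub)
  have hltF : ∀ ξ < b, ¬ famIter F ξ ⊆ {(∅ : Finset ℕ)} :=
    fun ξ h hsub => (not_le.mpr h) (csInf_le (OrderBot.bddBelow _) hsub)
  have ha_pos : 0 < a := by
    rcases eq_zero_or_pos a with h0 | h
    · exfalso
      apply hGtriv
      rw [← famIter_zero G, ← h0]
      exact ha_mem
    · exact h
  have hkey : famIter (famSum F G) a = F := by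
    rcases Ordinal.zero_or_succ_or_isSuccLimit a with h0 | ⟨ξ, hsucc⟩ | hlim
    · exact absurd h0 ha_pos.ne'
    · replace hsucc := hsucc.symm
      have hξ : ξ < a := by rw [hsucc]; exact Order.lt_succ ξ
      obtain ⟨H, hH, hHne⟩ := Set.not_subset.mp (hlt ξ hξ)
      rw [hsucc, ← add_one_eq_succ, famIter_succ,
        famIter_famSum hFh h0F hGs hGh ξ (hlt ξ hξ),
        famDeriv_famSum hFh h0F (hGs.famIter ξ) (hGh.famIter ξ)
          ⟨H, hH, by simpa using hHne⟩]
      apply famSum_eq_left h0F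
      have : famDeriv (famIter G ξ) = famIter G a := by
        rw [hsucc, ← add_one_eq_succ, famIter_succ]
      rw [this]
      exact ha_mem
    · have h0each : ∀ ζ : Set.Iio a, ∅ ∈ famIter G ζ.1 := by
        intro ζ
        obtain ⟨H, hH, _⟩ := Set.not_subset.mp (hlt ζ.1 ζ.2)
        exact hGh.famIter ζ.1 H hH ∅ (Finset.empty_subset _)
      rw [famIter_limit _ hlim]
      calc ⋂ (ζ : Set.Iio a), famIter (famSum F G) ζ.1
          = ⋂ (ζ : Set.Iio a), famSum F (famIter G ζ.1) :=
            Set.iInter_congr (fun ζ => famIter_famSum hFh h0F hGs hGh ζ.1 (hlt ζ.1 ζ.2))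
        _ = famSum F (⋂ (ζ : Set.Iio a), famIter G ζ.1) :=
            iInter_famSum hlim h0F (famIter G) (famIter_antitone G) h0each
        _ = F := famSum_eq_left h0F (by rw [← famIter_limit G hlim]; exact ha_mem)
  have hab_mem : famIter (famSum F G) (a + b) ⊆ {(∅ : Finset ℕ)} := by
    rw [famIter_add, hkey]
    exact hb_mem
  apply le_antisymm
  · exact csInf_le (OrderBot.bddBelow _) hab_mem
  · by_contra hcon
    push_neg at hcon
    set c := famIota (famSum F G) with hc
    have hc_mem : famIter (famSum F G) c ⊆ {(∅ : Finset ℕ)} := by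
      have h' := csInf_mem (s := {ξ : Ordinal | famIter (famSum F G) ξ ⊆ {(∅ : Finset ℕ)}})
        ⟨a + b, hab_mem⟩
      exact h'
    rcases lt_or_ge c a with h | h
    · apply hlt c h
      intro H hH
      exact hc_mem (by
        rw [famIter_famSum hFh h0F hGs hGh c (hlt c h)]
        exact famSum_subset_right _ _ hH)
    · have hd : c - a < b := by
        rwa [Ordinal.sub_lt_of_le h]
      apply hltF (c - a) hd
      calc famIter F (c - a) = famIter (famSum F G) c := by
            rw [← Ordinal.add_sub_cancel_of_le h, famIter_add, hkey,
              Ordinal.add_sub_cancel]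
        _ ⊆ {(∅ : Finset ℕ)} := hc_mem
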